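/- An element r of the algebraic closure ℚ̄ of ℚ is arithmetically fixed if and only if r is rational; that is, (ℚ̄)̃ equals the image of ℚ in ℚ̄. -/

import Mathlib

/-- A map `f` is *arithmetic* on a subset `A` of a field `K`. -/
def ArithmeticMap {K : Type*} [Field K] (A : Set K) (f : K → K) : Prop :=
  ((1 : K) ∈ A → f 1 = 1) ∧
  (∀ a b : K, a ∈ A → b ∈ A → a + b ∈ A → f (a + b) = f a + f b) ∧
  (∀ a b : K, a ∈ A → b ∈ A → a * b ∈ A → f (a * b) = f a * f b)

/-- An element `r` of a field `K` is *arithmetically fixed* if there is a finite set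
`A ⊆ K` with `r ∈ A` such that every arithmetic map `f : A → K` fixes `r`. -/
def ArithFixed {K : Type*} [Field K] (r : K) : Prop :=
  ∃ A : Finset K, r ∈ A ∧ ∀ f : K → K, ArithmeticMap (↑A : Set K) f → f r = r

/-- Every rational element of a field of characteristic zero is arithmetically fixed. -/
lemma arithFixed_of_rat {K : Type*} [Field K] [CharZero K] (q : ℚ) :
    ArithFixed (q : K) := by
  classical
  set m : ℤ := q.num with hm
  set n : ℕ := q.den with hn
  have hn1 : 1 ≤ n := q.pos
  set N : ℕ := max m.natAbs 1 with hN
  set T : Finset ℚ :=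
    ((Finset.range (N + 1)).image (fun k : ℕ => (k : ℚ))) ∪ {-1, (m : ℚ)} ∪
      ((Finset.range (n + 1)).image (fun k : ℕ => (k : ℚ) * q)) with hT
  refine ⟨T.image (fun x : ℚ => (x : K)), ?_, ?_⟩
  · refine Finset.mem_image_of_mem _ ?_
    have : (1 : ℚ) * q ∈ T := by
      simp only [hT, Finset.mem_union, Finset.mem_image, Finset.mem_range]
      right
      exact ⟨1, by omega, by push_cast; ring⟩
    simpa using this
  · intro f hf
    obtain ⟨h1, hadd, hmul⟩ := hf
    set A : Finset K := T.image (fun x : ℚ => (x : K)) with hA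
    have hmemA : ∀ x : ℚ, x ∈ T → (x : K) ∈ (↑A : Set K) := by
      intro x hx
      exact Finset.mem_coe.2 (Finset.mem_image_of_mem _ hx)
    -- membership helpers
    have hnatT : ∀ k : ℕ, k ≤ N → ((k : ℚ)) ∈ T := by
      intro k hk
      simp only [hT, Finset.mem_union, Finset.mem_image, Finset.mem_range]
      left; left
      exact ⟨k, by omega, rfl⟩
    have hneg1T : (-1 : ℚ) ∈ T := by simp [hT]
    have hmT : ((m : ℚ)) ∈ T := by simp [hT]
    have hkqT : ∀ k : ℕ, k ≤ n → ((k : ℚ) * q) ∈ T := by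
      intro k hk
      simp only [hT, Finset.mem_union, Finset.mem_image, Finset.mem_range]
      right
      exact ⟨k, by omega, rfl⟩
    have h0A : (0 : K) ∈ (↑A : Set K) := by simpa using hmemA 0 (by simpa using hnatT 0 (by omega))
    have h1A : (1 : K) ∈ (↑A : Set K) := by simpa using hmemA 1 (by simpa using hnatT 1 (by omega))
    -- f 0 = 0
    have hf0 : f 0 = 0 := by
      have := hadd 0 0 h0A h0A (by simpa using h0A)
      simpa using this
    have hf1 : f 1 = 1 := h1 h1A
    -- f fixes naturals up to N
    have hfnat : ∀ k : ℕ, k ≤ N → f (k : K) = k := by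
      intro k hk
      induction k with
      | zero => simpa using hf0
      | succ j ih =>
        have hjA : ((j : ℚ) : K) ∈ (↑A : Set K) := hmemA _ (hnatT j (by omega))
        have hjA1 : (((j : ℚ) + 1 : ℚ) : K) ∈ (↑A : Set K) := by
          have := hmemA _ (hnatT (j + 1) hk)
          push_cast at this ⊢
          exact this
        have := hadd ((j : ℚ) : K) 1 hjA (by simpa using h1A) (by push_cast at hjA1 ⊢; exact hjA1)
        push_cast at this ⊢
        rw [this, ih (by omega), hf1]
    -- f (-1) = -1
    have hneg1A : ((-1 : ℚ) : K) ∈ (↑A : Set K) := hmemA _ hneg1T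
    have hfneg1 : f (-1 : K) = -1 := by
      have := hadd ((-1 : ℚ) : K) 1 hneg1A (by simpa using h1A) (by simpa using h0A)
      push_cast at this
      simp only [neg_add_cancel, hf0] at this
      linear_combination -this - hf1
    -- f (m) = m
    have hfm : f ((m : ℚ) : K) = ((m : ℚ) : K) := by
      rcases le_or_gt 0 m with hm0 | hm0
      · have hcast : ((m : ℚ)) = ((m.natAbs : ℕ) : ℚ) := by
          have hint2 : m = ((m.natAbs : ℤ)) := by omega
          calc (m : ℚ) = (((m.natAbs : ℤ)) : ℚ) := by rw [← hint2]
          _ = ((m.natAbs : ℕ) : ℚ) := Int.cast_natCast _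
        rw [hcast]
        have := hfnat m.natAbs (le_max_left _ _)
        push_cast at this ⊢
        exact this
      · have habs : ((m.natAbs : ℚ) : K) ∈ (↑A : Set K) :=
          hmemA _ (by exact_mod_cast hnatT m.natAbs (le_max_left _ _))
        have hprod : ((-1 : ℚ) : K) * ((m.natAbs : ℚ) : K) = ((m : ℚ) : K) := by
          push_cast
          rw [show ((m.natAbs : K)) = -(m : K) by
            have hint2 : ((m.natAbs : ℤ)) = -m := by omega
            calc (m.natAbs : K) = ((m.natAbs : ℤ) : K) := (Int.cast_natCast _).symm
            _ = ((-m : ℤ) : K) := by rw [hint2]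
            _ = -(m : K) := by rw [Int.cast_neg]]
          ring
        have hmulA : ((-1 : ℚ) : K) * ((m.natAbs : ℚ) : K) ∈ (↑A : Set K) := by
          rw [hprod]; exact hmemA _ hmT
        have := hmul _ _ hneg1A habs hmulA
        rw [hprod] at this
        rw [this]
        have hfabs : f ((m.natAbs : ℚ) : K) = ((m.natAbs : ℚ) : K) := by
          have := hfnat m.natAbs (le_max_left _ _)
          push_cast at this ⊢
          exact this
        rw [hfabs]
        push_cast at hprod ⊢
        rw [hfneg1]
        linear_combination hprod
    -- f (k * q) = k * f q for k ≤ n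
    have hfkq : ∀ k : ℕ, k ≤ n → f (((k : ℚ) * q : ℚ) : K) = (k : K) * f ((q : ℚ) : K) := by
      intro k hk
      induction k with
      | zero => push_cast; simpa using hf0
      | succ j ih =>
        have hjq : (((j : ℚ) * q : ℚ) : K) ∈ (↑A : Set K) := hmemA _ (hkqT j (by omega))
        have hq : (((1 : ℚ) * q : ℚ) : K) ∈ (↑A : Set K) := hmemA _ (by simpa using hkqT 1 (by omega))
        have hq' : ((q : ℚ) : K) ∈ (↑A : Set K) := by simpa using hq
        have hsum : (((j : ℚ) * q : ℚ) : K) + ((q : ℚ) : K) ∈ (↑A : Set K) := by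
          have hmem := hmemA _ (hkqT (j + 1) hk)
          have e : (((j : ℚ) * q : ℚ) : K) + ((q : ℚ) : K) = ((((j + 1 : ℕ) : ℚ) * q : ℚ) : K) := by
            push_cast; ring
          rw [e]; exact hmem
        have := hadd _ _ hjq hq' hsum
        have heq : ((((j : ℚ) + 1) * q : ℚ) : K) = (((j : ℚ) * q : ℚ) : K) + ((q : ℚ) : K) := by
          push_cast; ring
        push_cast at heq this ih ⊢
        rw [heq, this, ih (by omega)]
        ring
    -- conclude
    have hkey := hfkq n le_rfl
    have hden : ((q.den : ℚ)) ≠ 0 := Nat.cast_ne_zero.mpr q.den_pos.ne'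
    have hnum : ((n : ℚ)) * q = (m : ℚ) := by
      rw [hm, hn, mul_comm]
      exact ((div_eq_iff hden).mp q.num_div_den).symm
    rw [hnum] at hkey
    rw [hfm] at hkey
    -- hkey : (m : K) = n * f q ; also (m : K) = n * q
    have hnq : ((m : ℚ) : K) = (n : K) * ((q : ℚ) : K) := by
      rw [← hnum]; push_cast; ring
    have hne : (n : K) ≠ 0 := Nat.cast_ne_zero.mpr q.den_pos.ne'
    have := hkey.symm.trans hnq
    exact mul_left_cancel₀ hne this

theorem arithFixed_algClosure_iff_rational :
    {r : AlgebraicClosure ℚ | ArithFixed r} =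
      Set.range (algebraMap ℚ (AlgebraicClosure ℚ)) := by
  classical
  ext r
  simp only [Set.mem_setOf_eq, Set.mem_range]
  constructor
  · intro hr
    by_contra h
    push_neg at h
    have hr' : r ∉ (algebraMap ℚ (AlgebraicClosure ℚ)).range := by
      rintro ⟨q, rfl⟩; exact h q rfl
    have : IsAlgClosure ℚ (AlgebraicClosure ℚ) := by
      convert AlgebraicClosure.instIsAlgClosure ℚ
      · rfl
      · exact Subsingleton.elim _ _
    have : Normal ℚ (AlgebraicClosure ℚ) := IsAlgClosure.normal ℚ _
    have hint : IsIntegral ℚ r := (IsAlgClosure.isAlgebraic.isAlgebraic r).isIntegral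
    have hdeg : 2 ≤ (minpoly ℚ r).natDegree := (minpoly.two_le_natDegree_iff hint).mpr hr'
    -- find another root of the minimal polynomial
    set p := (minpoly ℚ r).map (algebraMap ℚ (AlgebraicClosure ℚ)) with hp
    have hsplits : p.Splits :=
      IsAlgClosed.splits _
    have hcard : p.roots.card = (minpoly ℚ r).natDegree :=
      by rw [← hsplits.natDegree_eq_card_roots, hp, Polynomial.natDegree_map]
    have hnodup : p.roots.Nodup :=
      Polynomial.nodup_roots ((minpoly.irreducible hint).separable.map)
    have hex : ∃ x ∈ p.roots, x ≠ r := by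
      by_contra hall
      push_neg at hall
      have hcount : p.roots.count r = p.roots.card :=
        Multiset.count_eq_card.mpr (fun x hx => (hall x hx).symm)
      have hle : p.roots.count r ≤ 1 := Multiset.nodup_iff_count_le_one.mp hnodup r
      omega
    obtain ⟨x, hx, hxr⟩ := hex
    have hev : (Polynomial.aeval x) (minpoly ℚ r) = 0 := by
      have := Polynomial.isRoot_of_mem_roots hx
      rwa [Polynomial.IsRoot, hp, Polynomial.eval_map, ← Polynomial.aeval_def] at this
    obtain ⟨σ, hσ⟩ := minpoly.exists_algEquiv_of_root' (hint.isAlgebraic) hev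
    obtain ⟨A, hrA, hfix⟩ := hr
    have : (σ : AlgebraicClosure ℚ → AlgebraicClosure ℚ) r = r := by
      apply hfix
      exact ⟨fun _ => map_one σ, fun a b _ _ _ => map_add σ a b, fun a b _ _ _ => map_mul σ a b⟩
    rw [hσ] at this
    exact hxr this
  · rintro ⟨q, rfl⟩
    have h := arithFixed_of_rat (K := AlgebraicClosure ℚ) q
    rwa [show ((q : ℚ) : AlgebraicClosure ℚ) = algebraMap ℚ (AlgebraicClosure ℚ) q from
      (eq_ratCast (algebraMap ℚ (AlgebraicClosure ℚ)) q).symm] at h
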